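/- Let k be a field and H a Hopf algebra over k. The assignments Ψ(I) := H^{co H/I} and Φ(B) := HB⁺ are mutually inverse, inclusion-preserving bijections between (1) the set of left ideal coideals I of H satisfying the coequalizer condition, i.e. I equals the subspace of H spanned by {Σᵢ ε(xᵢ)yᵢ − Σᵢ xᵢε(yᵢ) : Σᵢ xᵢ ⊗ yᵢ ∈ H □^{H/I} H}, and (2) the set of right coideal subalgebras B of H satisfying the equalizer condition, i.e. B = {h ∈ H : h ⊗ 1 − 1 ⊗ h ∈ J_B}. -/

import Mathlib

open TensorProduct Coalgebra

noncomputable section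

namespace HopfGalois

variable (k : Type*) (H : Type*) [Field k] [Ring H] [HopfAlgebra k H]

local notation "εε" => (Coalgebra.counit : H →ₗ[k] k)
local notation "δ" => (Coalgebra.comul : H →ₗ[k] H ⊗[k] H)
local notation "𝒮" => (HopfAlgebra.antipode k : H →ₗ[k] H)

/-- The linear map `H ⊗ H → H`, `x ⊗ y ↦ ε(x) • y`. -/
def epsTensorId : H ⊗[k] H →ₗ[k] H :=
  (TensorProduct.lid k H).toLinearMap ∘ₗ
    TensorProduct.map (Coalgebra.counit : H →ₗ[k] k) (LinearMap.id : H →ₗ[k] H)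

/-- The linear map `H ⊗ H → H`, `x ⊗ y ↦ ε(y) • x`. -/
def idTensorEps : H ⊗[k] H →ₗ[k] H :=
  (TensorProduct.rid k H).toLinearMap ∘ₗ
    TensorProduct.map (LinearMap.id : H →ₗ[k] H) (Coalgebra.counit : H →ₗ[k] k)

/-- `x ⊗ y ↦ Σ x₍₁₎ ⊗ π_I(x₍₂₎) ⊗ y`. -/
def cotensorL (I : Submodule k H) : H ⊗[k] H →ₗ[k] H ⊗[k] ((H ⧸ I) ⊗[k] H) :=
  TensorProduct.map (LinearMap.id : H →ₗ[k] H)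
      (TensorProduct.map I.mkQ (LinearMap.id : H →ₗ[k] H))
    ∘ₗ (TensorProduct.assoc k H H H).toLinearMap
    ∘ₗ TensorProduct.map (Coalgebra.comul : H →ₗ[k] H ⊗[k] H) (LinearMap.id : H →ₗ[k] H)

/-- `x ⊗ y ↦ Σ x ⊗ π_I(y₍₁₎) ⊗ y₍₂₎`. -/
def cotensorR (I : Submodule k H) : H ⊗[k] H →ₗ[k] H ⊗[k] ((H ⧸ I) ⊗[k] H) :=
  TensorProduct.map (LinearMap.id : H →ₗ[k] H)
    (TensorProduct.map I.mkQ (LinearMap.id : H →ₗ[k] H)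
      ∘ₗ (Coalgebra.comul : H →ₗ[k] H ⊗[k] H))

/-- The cotensor product `H □^{H/I} H` as a subspace of `H ⊗ H`. -/
def cotensor (I : Submodule k H) : Submodule k (H ⊗[k] H) :=
  LinearMap.ker (cotensorL k H I - cotensorR k H I)

/-- The subspace of coinvariants `H^{co H/I}`:
`{x ∈ H : Σ π_I(x₍₁₎) ⊗ x₍₂₎ = π_I(1) ⊗ x}`. -/
def coinv (I : Submodule k H) : Submodule k H :=
  LinearMap.ker
    ((TensorProduct.map I.mkQ (LinearMap.id : H →ₗ[k] H)
        ∘ₗ (Coalgebra.comul : H →ₗ[k] H ⊗[k] H))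
      - TensorProduct.mk k (H ⧸ I) H (I.mkQ 1))

/-- A left ideal coideal: a left ideal `I` with `ε(I) = 0` and `Δ(I) ⊆ I ⊗ H + H ⊗ I`. -/
structure IsLeftIdealCoideal (I : Submodule k H) : Prop where
  mul_mem_left : ∀ (h x : H), x ∈ I → h * x ∈ I
  counit_zero : ∀ x ∈ I, (Coalgebra.counit : H →ₗ[k] k) x = 0
  comul_mem : ∀ x ∈ I, (Coalgebra.comul : H →ₗ[k] H ⊗[k] H) x ∈
    LinearMap.range (TensorProduct.map I.subtype (LinearMap.id : H →ₗ[k] H)) ⊔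
      LinearMap.range (TensorProduct.map (LinearMap.id : H →ₗ[k] H) I.subtype)

/-- A right coideal subalgebra: a subalgebra `B` with `Δ(B) ⊆ B ⊗ H`. -/
def IsRightCoidealSubalgebra (B : Subalgebra k H) : Prop :=
  ∀ b ∈ B, (Coalgebra.comul : H →ₗ[k] H ⊗[k] H) b ∈
    LinearMap.range
      (TensorProduct.map (Subalgebra.toSubmodule B).subtype (LinearMap.id : H →ₗ[k] H))

/-- The left ideal of `H` generated by a subset `S`, as a `k`-subspace of `H`. -/
def leftIdealGen (S : Set H) : Submodule k H :=
  Submodule.span k {z : H | ∃ h : H, ∃ b ∈ S, z = h * b}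

/-- `S⁺ = S ∩ ker ε`. -/
def plusPart (S : Set H) : Set H :=
  {b ∈ S | (Coalgebra.counit : H →ₗ[k] k) b = 0}

/-- `H·S⁺`, the left ideal of `H` generated by `S ∩ ker ε`. -/
def HSplus (S : Set H) : Submodule k H :=
  leftIdealGen k H (plusPart k H S)

/-- The subspace `J_B ⊆ H ⊗ H` spanned by `{xb ⊗ y − x ⊗ by : x, y ∈ H, b ∈ B}`,
so that `H ⊗_B H = (H ⊗ H)/J_B`. -/
def JB (S : Set H) : Submodule k (H ⊗[k] H) :=
  Submodule.span k
    {z : H ⊗[k] H | ∃ x y : H, ∃ b ∈ S, z = (x * b) ⊗ₜ[k] y - x ⊗ₜ[k] (b * y)}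

/-- `B` is the equalizer of the two canonical maps `H → H ⊗_B H`. -/
def equalizerCond (S : Set H) : Prop :=
  {h : H | h ⊗ₜ[k] (1 : H) - (1 : H) ⊗ₜ[k] h ∈ JB k H S} = S

/-- `H/I` is the coequalizer of `ε ⊗ id` and `id ⊗ ε` restricted to `H □^{H/I} H`, i.e.
`I` is the subspace spanned by `{Σ ε(xᵢ)yᵢ − Σ xᵢε(yᵢ) : Σ xᵢ ⊗ yᵢ ∈ H □^{H/I} H}`. -/
def coequalizerCond (I : Submodule k H) : Prop :=
  I = Submodule.map (epsTensorId k H - idTensorEps k H) (cotensor k H I)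



variable {k H}

universe uR

/-- A representation of `comul a` with a bundled index type. -/
structure Repr (R : Type*) {A : Type uR} [Field R] [Ring A] [HopfAlgebra R A] (a : A) where
  ι : Type uR
  index : Finset ι
  left : ι → A
  right : ι → A
  eq : ∑ i ∈ index, left i ⊗ₜ[R] right i = Coalgebra.comul (R := R) a

/-- The unbundled representation. -/
abbrev Repr.toC {R : Type*} {A : Type uR} [Field R] [Ring A] [HopfAlgebra R A] {a : A}
    (r : Repr R a) : Coalgebra.Repr R a r.ι :=
  ⟨r.index, r.left, r.right, r.eq⟩

instance {R : Type*} {A : Type uR} [Field R] [Ring A] [HopfAlgebra R A] {a : A} {ι : Type uR} :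
    CoeOut (Coalgebra.Repr R a ι) (Repr R a) :=
  ⟨fun r => ⟨ι, r.index, r.left, r.right, r.eq⟩⟩

lemma sum_counit_smul_right {a : H} (r : Repr k a) :
    ∑ i ∈ r.index, εε (r.right i) • r.left i = a := by
  have h := Coalgebra.sum_tmul_counit_eq r.toC
  have h2 := congrArg (TensorProduct.rid k H).toLinearMap h
  rw [map_sum] at h2
  simpa using h2

lemma sum_counit_smul_left {a : H} (r : Repr k a) :
    ∑ i ∈ r.index, εε (r.left i) • r.right i = a := by
  have h := Coalgebra.sum_counit_tmul_eq r.toC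
  have h2 := congrArg (TensorProduct.lid k H).toLinearMap h
  rw [map_sum] at h2
  simpa using h2

/-- product of two representations -/
def Repr.mul {a b : H} (r : Repr k a) (s : Repr k b) : Repr k (a * b) where
  ι := r.ι × s.ι
  index := r.index ×ˢ s.index
  left := fun p => r.left p.1 * s.left p.2
  right := fun p => r.right p.1 * s.right p.2
  eq := by
    rw [Finset.sum_product]
    rw [show (Coalgebra.comul (R := k) (a * b)) = Coalgebra.comul (R := k) a *
      Coalgebra.comul (R := k) b from Bialgebra.comul_mul a b, ← r.eq, ← s.eq,
      Finset.sum_mul_sum]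
    simp [Algebra.TensorProduct.tmul_mul_tmul]

universe uk uH

lemma exists_repr_subset {k : Type uk} {H : Type uH} [Field k] [Ring H] [HopfAlgebra k H]
    {b : H} {N : Submodule k H}
    (h : (Coalgebra.comul : H →ₗ[k] H ⊗[k] H) b ∈
      LinearMap.range (TensorProduct.map N.subtype (LinearMap.id : H →ₗ[k] H))) :
    ∃ r : Repr k b, ∀ i ∈ r.index, r.left i ∈ N := by
  obtain ⟨w, hw⟩ := h
  obtain ⟨T, hT⟩ := TensorProduct.exists_finset (R := k) w
  refine ⟨Repr.mk (ι := ↥N × H) T (fun p => (p.1 : H)) (fun p => p.2) ?_,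
    fun i _ => i.1.2⟩
  rw [← hw, hT, map_sum]
  simp

variable (k H)

/-- The Galois map `x ⊗ y ↦ Σ x₁ ⊗ x₂ y`. -/
def gal : H ⊗[k] H →ₗ[k] H ⊗[k] H :=
  (LinearMap.mul' k H).lTensor H ∘ₗ (TensorProduct.assoc k H H H).toLinearMap ∘ₗ
    (Coalgebra.comul (R := k) (A := H)).rTensor H

/-- `x ⊗ y ↦ Σ x₁ ⊗ S(x₂) y`. -/
def galInv : H ⊗[k] H →ₗ[k] H ⊗[k] H :=
  (LinearMap.mul' k H).lTensor H ∘ₗ (TensorProduct.assoc k H H H).toLinearMap ∘ₗ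
    ((HopfAlgebra.antipode (R := k)).lTensor H ∘ₗ Coalgebra.comul).rTensor H

variable {k H}

lemma gal_tmul {a : H} (r : Repr k a) (y : H) :
    gal k H (a ⊗ₜ[k] y) = ∑ i ∈ r.index, r.left i ⊗ₜ[k] (r.right i * y) := by
  simp only [gal, LinearMap.comp_apply, LinearMap.rTensor_tmul]
  rw [← r.eq, TensorProduct.sum_tmul, map_sum, map_sum]
  simp

lemma galInv_tmul {a : H} (r : Repr k a) (y : H) :
    galInv k H (a ⊗ₜ[k] y) = ∑ i ∈ r.index, r.left i ⊗ₜ[k] (𝒮 (r.right i) * y) := by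
  simp only [galInv, LinearMap.comp_apply, LinearMap.rTensor_tmul]
  rw [← r.eq, map_sum, TensorProduct.sum_tmul, map_sum, map_sum]
  simp


/-- Apply a linear map to the coassociativity double-sum identity. -/
lemma coassoc_tri {M : Type*} [AddCommGroup M] [Module k M] {a : H} (r : Repr k a)
    (a₁ : (i : r.ι) → Repr k (r.left i)) (a₂ : (i : r.ι) → Repr k (r.right i))
    (L : H ⊗[k] (H ⊗[k] H) →ₗ[k] M) :
    ∑ i ∈ r.index, ∑ j ∈ (a₁ i).index,
        L ((a₁ i).left j ⊗ₜ[k] ((a₁ i).right j ⊗ₜ[k] r.right i)) =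
    ∑ i ∈ r.index, ∑ j ∈ (a₂ i).index,
        L (r.left i ⊗ₜ[k] ((a₂ i).left j ⊗ₜ[k] (a₂ i).right j)) := by
  have h := congrArg L (Coalgebra.sum_tmul_tmul_eq r.toC (fun i => (a₁ i).toC)
    (fun i => (a₂ i).toC))
  simpa [map_sum, Repr.toC] using h

lemma galInv_gal (z : H ⊗[k] H) : galInv k H (gal k H z) = z := by
  induction z using TensorProduct.induction_on with
  | zero => simp
  | add u v hu hv => rw [map_add, map_add, hu, hv]
  | tmul x y =>
    classical
    let r : Repr k x := ℛ k x
    let a₁ : (i : r.ι) → Repr k (r.left i) := fun i => ℛ k (r.left i)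
    let a₂ : (i : r.ι) → Repr k (r.right i) := fun i => ℛ k (r.right i)
    rw [gal_tmul r, map_sum, Finset.sum_congr rfl
      (fun i _ => galInv_tmul (a₁ i) (r.right i * y))]
    have key := coassoc_tri r a₁ a₂
      (TensorProduct.map LinearMap.id ((LinearMap.mul' k H) ∘ₗ
        (TensorProduct.map 𝒮 (LinearMap.mulRight k y))))
    simp only [TensorProduct.map_tmul, LinearMap.comp_apply, LinearMap.id_coe, id_eq,
      LinearMap.mul'_apply, LinearMap.mulRight_apply] at key
    calc ∑ i ∈ r.index, ∑ j ∈ (a₁ i).index,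
          (a₁ i).left j ⊗ₜ[k] (𝒮 ((a₁ i).right j) * (r.right i * y))
        = ∑ i ∈ r.index, ∑ j ∈ (a₂ i).index,
          r.left i ⊗ₜ[k] (𝒮 ((a₂ i).left j) * ((a₂ i).right j * y)) := by
          convert key using 4 <;> rw [mul_assoc]
      _ = ∑ i ∈ r.index, r.left i ⊗ₜ[k] ((εε (r.right i)) • y) := by
          refine Finset.sum_congr rfl (fun i _ => ?_)
          rw [← TensorProduct.tmul_sum]
          congr 1
          calc ∑ j ∈ (a₂ i).index, 𝒮 ((a₂ i).left j) * ((a₂ i).right j * y)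
              = (∑ j ∈ (a₂ i).index, 𝒮 ((a₂ i).left j) * (a₂ i).right j) * y := by
                rw [Finset.sum_mul]; exact Finset.sum_congr rfl fun j _ => (mul_assoc _ _ _).symm
            _ = εε (r.right i) • y := by
                rw [HopfAlgebra.sum_antipode_mul_eq_algebraMap_counit (a₂ i).toC, Algebra.smul_def]
      _ = ∑ i ∈ r.index, (εε (r.right i) • r.left i) ⊗ₜ[k] y := by
          refine Finset.sum_congr rfl fun i _ => ?_
          rw [TensorProduct.tmul_smul, TensorProduct.smul_tmul']
      _ = x ⊗ₜ[k] y := by rw [← TensorProduct.sum_tmul, sum_counit_smul_right r]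

lemma gal_galInv (z : H ⊗[k] H) : gal k H (galInv k H z) = z := by
  induction z using TensorProduct.induction_on with
  | zero => simp
  | add u v hu hv => rw [map_add, map_add, hu, hv]
  | tmul x y =>
    classical
    let r : Repr k x := ℛ k x
    let a₁ : (i : r.ι) → Repr k (r.left i) := fun i => ℛ k (r.left i)
    let a₂ : (i : r.ι) → Repr k (r.right i) := fun i => ℛ k (r.right i)
    rw [galInv_tmul r, map_sum, Finset.sum_congr rfl
      (fun i _ => gal_tmul (a₁ i) (𝒮 (r.right i) * y))]
    have key := coassoc_tri r a₁ a₂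
      (TensorProduct.map LinearMap.id ((LinearMap.mul' k H) ∘ₗ
        (TensorProduct.map LinearMap.id ((LinearMap.mulRight k y) ∘ₗ 𝒮))))
    simp only [TensorProduct.map_tmul, LinearMap.comp_apply, LinearMap.id_coe, id_eq,
      LinearMap.mul'_apply, LinearMap.mulRight_apply] at key
    calc ∑ i ∈ r.index, ∑ j ∈ (a₁ i).index,
          (a₁ i).left j ⊗ₜ[k] ((a₁ i).right j * (𝒮 (r.right i) * y))
        = ∑ i ∈ r.index, ∑ j ∈ (a₂ i).index,
          r.left i ⊗ₜ[k] ((a₂ i).left j * (𝒮 ((a₂ i).right j) * y)) := key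
      _ = ∑ i ∈ r.index, r.left i ⊗ₜ[k] ((εε (r.right i)) • y) := by
          refine Finset.sum_congr rfl (fun i _ => ?_)
          rw [← TensorProduct.tmul_sum]
          congr 1
          calc ∑ j ∈ (a₂ i).index, (a₂ i).left j * (𝒮 ((a₂ i).right j) * y)
              = (∑ j ∈ (a₂ i).index, (a₂ i).left j * 𝒮 ((a₂ i).right j)) * y := by
                rw [Finset.sum_mul]; exact Finset.sum_congr rfl fun j _ => (mul_assoc _ _ _).symm
            _ = εε (r.right i) • y := by
                rw [HopfAlgebra.sum_mul_antipode_eq_algebraMap_counit (a₂ i).toC, Algebra.smul_def]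
      _ = ∑ i ∈ r.index, (εε (r.right i) • r.left i) ⊗ₜ[k] y := by
          refine Finset.sum_congr rfl fun i _ => ?_
          rw [TensorProduct.tmul_smul, TensorProduct.smul_tmul']
      _ = x ⊗ₜ[k] y := by rw [← TensorProduct.sum_tmul, sum_counit_smul_right r]

lemma ker_map_mkQ_left (I : Submodule k H) :
    LinearMap.ker (TensorProduct.map I.mkQ (LinearMap.id : H →ₗ[k] H)) =
    LinearMap.range (TensorProduct.map I.subtype (LinearMap.id : H →ₗ[k] H)) :=
  LinearMap.exact_iff.mp (Module.Flat.rTensor_exact (M := H) (LinearMap.exact_subtype_mkQ I))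

lemma ker_map_phi_right {W : Type*} [AddCommGroup W] [Module k W] (φ : H →ₗ[k] W) :
    LinearMap.ker (TensorProduct.map (LinearMap.id : H →ₗ[k] H) φ) =
    LinearMap.range (TensorProduct.map (LinearMap.id : H →ₗ[k] H)
      (LinearMap.ker φ).subtype) :=
  LinearMap.exact_iff.mp (Module.Flat.lTensor_exact (M := H)
    (LinearMap.exact_subtype_ker_map φ))

lemma ker_map_phi_left {W : Type*} [AddCommGroup W] [Module k W] (φ : H →ₗ[k] W) :
    LinearMap.ker (TensorProduct.map φ (LinearMap.id : H →ₗ[k] H)) =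
    LinearMap.range (TensorProduct.map (LinearMap.ker φ).subtype
      (LinearMap.id : H →ₗ[k] H)) :=
  LinearMap.exact_iff.mp (Module.Flat.rTensor_exact (M := H)
    (LinearMap.exact_subtype_ker_map φ))

lemma tmul_mem_range_left {N : Submodule k H} {w : H} (hw : w ∈ N) (v : H) :
    w ⊗ₜ[k] v ∈ LinearMap.range
      (TensorProduct.map N.subtype (LinearMap.id : H →ₗ[k] H)) :=
  ⟨(⟨w, hw⟩ : N) ⊗ₜ[k] v, by simp⟩

lemma tmul_mem_range_right {N : Submodule k H} {w : H} (hw : w ∈ N) (v : H) :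
    v ⊗ₜ[k] w ∈ LinearMap.range
      (TensorProduct.map (LinearMap.id : H →ₗ[k] H) N.subtype) :=
  ⟨v ⊗ₜ[k] (⟨w, hw⟩ : N), by simp⟩


section Act

variable (I : Submodule k H) (hI : ∀ (h x : H), x ∈ I → h * x ∈ I)

/-- Left action of `H` on `H ⧸ I` for a left ideal `I`, as a linear map. -/
def actHom : H →ₗ[k] ((H ⧸ I) →ₗ[k] (H ⧸ I)) where
  toFun h := Submodule.mapQ I I (LinearMap.mulLeft k h)
    (@id (I ≤ I.comap (LinearMap.mulLeft k h)) (fun x hx => hI h x hx))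
  map_add' h h' := by
    apply Submodule.linearMap_qext; ext x
    simp [add_mul]
  map_smul' c h := by
    apply Submodule.linearMap_qext; ext x
    simp [smul_mul_assoc]

/-- The action as a map `H ⊗ (H ⧸ I) → H ⧸ I`. -/
def act : H ⊗[k] (H ⧸ I) →ₗ[k] H ⧸ I := TensorProduct.lift (actHom I hI)

@[simp] lemma act_tmul_mk (h x : H) :
    act I hI (h ⊗ₜ[k] Submodule.Quotient.mk x) = Submodule.Quotient.mk (h * x) := by
  simp [act, actHom]

lemma act_act (h h' : H) (q : H ⧸ I) :
    act I hI (h ⊗ₜ[k] act I hI (h' ⊗ₜ[k] q)) = act I hI ((h * h') ⊗ₜ[k] q) := by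
  obtain ⟨x, rfl⟩ := Submodule.Quotient.mk_surjective I q
  simp [mul_assoc]

lemma act_algebraMap (c : k) (q : H ⧸ I) :
    act I hI ((algebraMap k H c) ⊗ₜ[k] q) = c • q := by
  obtain ⟨x, rfl⟩ := Submodule.Quotient.mk_surjective I q
  rw [Algebra.algebraMap_eq_smul_one]
  simp [TensorProduct.smul_tmul']

/-- `x ⊗ q ⊗ b ↦ Σ x₁ ⊗ (x₂ · q) ⊗ b`. -/
def thetaQ : H ⊗[k] ((H ⧸ I) ⊗[k] H) →ₗ[k] H ⊗[k] ((H ⧸ I) ⊗[k] H) :=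
  TensorProduct.map LinearMap.id (TensorProduct.map (act I hI) LinearMap.id)
    ∘ₗ TensorProduct.map LinearMap.id (TensorProduct.assoc k H (H ⧸ I) H).symm.toLinearMap
    ∘ₗ (TensorProduct.assoc k H H ((H ⧸ I) ⊗[k] H)).toLinearMap
    ∘ₗ TensorProduct.map (Coalgebra.comul : H →ₗ[k] H ⊗[k] H) LinearMap.id

/-- `x ⊗ q ⊗ b ↦ Σ x₁ ⊗ (S x₂ · q) ⊗ b`. -/
def lambdaQ : H ⊗[k] ((H ⧸ I) ⊗[k] H) →ₗ[k] H ⊗[k] ((H ⧸ I) ⊗[k] H) :=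
  TensorProduct.map LinearMap.id (TensorProduct.map (act I hI) LinearMap.id)
    ∘ₗ TensorProduct.map LinearMap.id (TensorProduct.assoc k H (H ⧸ I) H).symm.toLinearMap
    ∘ₗ (TensorProduct.assoc k H H ((H ⧸ I) ⊗[k] H)).toLinearMap
    ∘ₗ TensorProduct.map ((HopfAlgebra.antipode (R := k)).lTensor H ∘ₗ Coalgebra.comul)
        LinearMap.id

/-- `x ⊗ q ⊗ b ↦ Σ x₁ ⊗ q ⊗ x₂ b`. -/
def thetaB : H ⊗[k] ((H ⧸ I) ⊗[k] H) →ₗ[k] H ⊗[k] ((H ⧸ I) ⊗[k] H) :=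
  TensorProduct.map LinearMap.id
      (TensorProduct.map LinearMap.id (LinearMap.mul' k H)
        ∘ₗ (TensorProduct.leftComm k H (H ⧸ I) H).toLinearMap)
    ∘ₗ (TensorProduct.assoc k H H ((H ⧸ I) ⊗[k] H)).toLinearMap
    ∘ₗ TensorProduct.map (Coalgebra.comul : H →ₗ[k] H ⊗[k] H) LinearMap.id

/-- `x ⊗ q ⊗ b ↦ Σ x₁ ⊗ q ⊗ S(x₂) b`. -/
def lambdaB : H ⊗[k] ((H ⧸ I) ⊗[k] H) →ₗ[k] H ⊗[k] ((H ⧸ I) ⊗[k] H) :=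
  TensorProduct.map LinearMap.id
      (TensorProduct.map LinearMap.id (LinearMap.mul' k H)
        ∘ₗ (TensorProduct.leftComm k H (H ⧸ I) H).toLinearMap)
    ∘ₗ (TensorProduct.assoc k H H ((H ⧸ I) ⊗[k] H)).toLinearMap
    ∘ₗ TensorProduct.map ((HopfAlgebra.antipode (R := k)).lTensor H ∘ₗ Coalgebra.comul)
        LinearMap.id

variable {I}

lemma thetaQ_tmul {a : H} (r : Repr k a) (q : H ⧸ I) (b : H) :
    thetaQ I hI (a ⊗ₜ[k] (q ⊗ₜ[k] b)) =
      ∑ i ∈ r.index, r.left i ⊗ₜ[k] (act I hI (r.right i ⊗ₜ[k] q) ⊗ₜ[k] b) := by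
  simp only [thetaQ, LinearMap.comp_apply, TensorProduct.map_tmul, LinearMap.id_coe, id_eq]
  rw [← r.eq, TensorProduct.sum_tmul, map_sum, map_sum, map_sum]
  simp

lemma lambdaQ_tmul {a : H} (r : Repr k a) (q : H ⧸ I) (b : H) :
    lambdaQ I hI (a ⊗ₜ[k] (q ⊗ₜ[k] b)) =
      ∑ i ∈ r.index, r.left i ⊗ₜ[k] (act I hI (𝒮 (r.right i) ⊗ₜ[k] q) ⊗ₜ[k] b) := by
  simp only [lambdaQ, LinearMap.comp_apply, TensorProduct.map_tmul, LinearMap.id_coe, id_eq]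
  rw [← r.eq, map_sum, TensorProduct.sum_tmul, map_sum, map_sum, map_sum]
  simp

lemma thetaB_tmul {a : H} (r : Repr k a) (q : H ⧸ I) (b : H) :
    thetaB I (a ⊗ₜ[k] (q ⊗ₜ[k] b)) =
      ∑ i ∈ r.index, r.left i ⊗ₜ[k] (q ⊗ₜ[k] (r.right i * b)) := by
  simp only [thetaB, LinearMap.comp_apply, TensorProduct.map_tmul, LinearMap.id_coe, id_eq]
  rw [← r.eq, TensorProduct.sum_tmul, map_sum, map_sum]
  simp [TensorProduct.leftComm]

lemma lambdaB_tmul {a : H} (r : Repr k a) (q : H ⧸ I) (b : H) :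
    lambdaB I (a ⊗ₜ[k] (q ⊗ₜ[k] b)) =
      ∑ i ∈ r.index, r.left i ⊗ₜ[k] (q ⊗ₜ[k] (𝒮 (r.right i) * b)) := by
  simp only [lambdaB, LinearMap.comp_apply, TensorProduct.map_tmul, LinearMap.id_coe, id_eq]
  rw [← r.eq, map_sum, TensorProduct.sum_tmul, map_sum, map_sum]
  simp [TensorProduct.leftComm]


lemma lambdaQ_thetaQ (z : H ⊗[k] ((H ⧸ I) ⊗[k] H)) :
    lambdaQ I hI (thetaQ I hI z) = z := by
  induction z using TensorProduct.induction_on with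
  | zero => simp
  | add u v hu hv => rw [map_add, map_add, hu, hv]
  | tmul x t =>
    induction t using TensorProduct.induction_on with
    | zero => simp
    | add u v hu hv =>
      rw [TensorProduct.tmul_add, map_add, map_add, hu, hv]
    | tmul q b =>
      classical
      let r : Repr k x := ℛ k x
      let a₁ : (i : r.ι) → Repr k (r.left i) := fun i => ℛ k (r.left i)
      let a₂ : (i : r.ι) → Repr k (r.right i) := fun i => ℛ k (r.right i)
      rw [thetaQ_tmul hI r q b, map_sum, Finset.sum_congr rfl
        (fun i _ => lambdaQ_tmul hI (a₁ i) (act I hI (r.right i ⊗ₜ[k] q)) b)]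
      have key := coassoc_tri r a₁ a₂
        (TensorProduct.map LinearMap.id
          ((((TensorProduct.mk k (H ⧸ I) H).flip b)
            ∘ₗ ((act I hI) ∘ₗ ((TensorProduct.mk k H (H ⧸ I)).flip q))
            ∘ₗ ((LinearMap.mul' k H) ∘ₗ TensorProduct.map 𝒮 LinearMap.id))))
      simp only [TensorProduct.map_tmul, LinearMap.comp_apply, LinearMap.id_coe, id_eq,
        LinearMap.mul'_apply, LinearMap.flip_apply, TensorProduct.mk_apply] at key
      calc ∑ i ∈ r.index, ∑ j ∈ (a₁ i).index, (a₁ i).left j ⊗ₜ[k]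
            (act I hI (𝒮 ((a₁ i).right j) ⊗ₜ[k] act I hI (r.right i ⊗ₜ[k] q)) ⊗ₜ[k] b)
          = ∑ i ∈ r.index, ∑ j ∈ (a₁ i).index, (a₁ i).left j ⊗ₜ[k]
            (act I hI ((𝒮 ((a₁ i).right j) * r.right i) ⊗ₜ[k] q) ⊗ₜ[k] b) := by
            refine Finset.sum_congr rfl fun i _ => Finset.sum_congr rfl fun j _ => ?_
            rw [act_act]
        _ = ∑ i ∈ r.index, ∑ j ∈ (a₂ i).index, r.left i ⊗ₜ[k]
            (act I hI ((𝒮 ((a₂ i).left j) * (a₂ i).right j) ⊗ₜ[k] q) ⊗ₜ[k] b) := key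
        _ = ∑ i ∈ r.index, r.left i ⊗ₜ[k] ((εε (r.right i) • q) ⊗ₜ[k] b) := by
            refine Finset.sum_congr rfl fun i _ => ?_
            have hs : ∑ j ∈ (a₂ i).index,
                act I hI ((𝒮 ((a₂ i).left j) * (a₂ i).right j) ⊗ₜ[k] q)
                = εε (r.right i) • q := by
              rw [← map_sum, ← TensorProduct.sum_tmul,
                HopfAlgebra.sum_antipode_mul_eq_algebraMap_counit (a₂ i).toC, act_algebraMap]
            rw [← TensorProduct.tmul_sum, ← TensorProduct.sum_tmul, hs]
        _ = x ⊗ₜ[k] (q ⊗ₜ[k] b) := by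
            have hx := sum_counit_smul_right r
            calc ∑ i ∈ r.index, r.left i ⊗ₜ[k] ((εε (r.right i) • q) ⊗ₜ[k] b)
                = ∑ i ∈ r.index, (εε (r.right i) • r.left i) ⊗ₜ[k] (q ⊗ₜ[k] b) := by
                  refine Finset.sum_congr rfl fun i _ => ?_
                  simp only [TensorProduct.tmul_smul, ← TensorProduct.smul_tmul']
              _ = x ⊗ₜ[k] (q ⊗ₜ[k] b) := by rw [← TensorProduct.sum_tmul, hx]

lemma lambdaB_thetaB (z : H ⊗[k] ((H ⧸ I) ⊗[k] H)) :
    lambdaB I (thetaB I z) = z := by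
  induction z using TensorProduct.induction_on with
  | zero => simp
  | add u v hu hv => rw [map_add, map_add, hu, hv]
  | tmul x t =>
    induction t using TensorProduct.induction_on with
    | zero => simp
    | add u v hu hv =>
      rw [TensorProduct.tmul_add, map_add, map_add, hu, hv]
    | tmul q b =>
      classical
      let r : Repr k x := ℛ k x
      let a₁ : (i : r.ι) → Repr k (r.left i) := fun i => ℛ k (r.left i)
      let a₂ : (i : r.ι) → Repr k (r.right i) := fun i => ℛ k (r.right i)
      rw [thetaB_tmul r q b, map_sum, Finset.sum_congr rfl
        (fun i _ => lambdaB_tmul (a₁ i) q (r.right i * b))]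
      have key := coassoc_tri r a₁ a₂
        (TensorProduct.map LinearMap.id
          (((TensorProduct.mk k (H ⧸ I) H) q)
            ∘ₗ ((LinearMap.mul' k H) ∘ₗ TensorProduct.map 𝒮 (LinearMap.mulRight k b))))
      simp only [TensorProduct.map_tmul, LinearMap.comp_apply, LinearMap.id_coe, id_eq,
        LinearMap.mul'_apply, LinearMap.mulRight_apply, TensorProduct.mk_apply] at key
      calc ∑ i ∈ r.index, ∑ j ∈ (a₁ i).index, (a₁ i).left j ⊗ₜ[k]
            (q ⊗ₜ[k] (𝒮 ((a₁ i).right j) * (r.right i * b)))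
          = ∑ i ∈ r.index, ∑ j ∈ (a₂ i).index, r.left i ⊗ₜ[k]
            (q ⊗ₜ[k] (𝒮 ((a₂ i).left j) * ((a₂ i).right j * b))) := key
        _ = ∑ i ∈ r.index, r.left i ⊗ₜ[k] (q ⊗ₜ[k] (εε (r.right i) • b)) := by
            refine Finset.sum_congr rfl fun i _ => ?_
            rw [← TensorProduct.tmul_sum, ← TensorProduct.tmul_sum]
            congr 2
            calc ∑ j ∈ (a₂ i).index, 𝒮 ((a₂ i).left j) * ((a₂ i).right j * b)
                = (∑ j ∈ (a₂ i).index, 𝒮 ((a₂ i).left j) * (a₂ i).right j) * b := by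
                  rw [Finset.sum_mul]
                  exact Finset.sum_congr rfl fun j _ => (mul_assoc _ _ _).symm
              _ = εε (r.right i) • b := by
                  rw [HopfAlgebra.sum_antipode_mul_eq_algebraMap_counit (a₂ i).toC, Algebra.smul_def]
        _ = x ⊗ₜ[k] (q ⊗ₜ[k] b) := by
            have hx := sum_counit_smul_right r
            calc ∑ i ∈ r.index, r.left i ⊗ₜ[k] (q ⊗ₜ[k] (εε (r.right i) • b))
                = ∑ i ∈ r.index, (εε (r.right i) • r.left i) ⊗ₜ[k] (q ⊗ₜ[k] b) := by
                  refine Finset.sum_congr rfl fun i _ => ?_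
                  simp only [TensorProduct.tmul_smul, ← TensorProduct.smul_tmul']
              _ = x ⊗ₜ[k] (q ⊗ₜ[k] b) := by rw [← TensorProduct.sum_tmul, hx]

end Act


section Key

variable {I : Submodule k H} (hI : ∀ (h x : H), x ∈ I → h * x ∈ I)

/-- The defining map of `coinv`. -/
def chi (I : Submodule k H) : H →ₗ[k] (H ⧸ I) ⊗[k] H :=
  (TensorProduct.map I.mkQ (LinearMap.id : H →ₗ[k] H)
      ∘ₗ (Coalgebra.comul : H →ₗ[k] H ⊗[k] H))
    - TensorProduct.mk k (H ⧸ I) H (I.mkQ 1)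

lemma coinv_eq_ker : coinv k H I = LinearMap.ker (chi I) := rfl

lemma chi_apply (h : H) :
    chi I h = TensorProduct.map I.mkQ (LinearMap.id : H →ₗ[k] H)
      ((Coalgebra.comul : H →ₗ[k] H ⊗[k] H) h - 1 ⊗ₜ[k] h) := by
  rw [map_sub]
  simp [chi]

lemma mem_coinv_iff {h : H} :
    h ∈ coinv k H I ↔ (Coalgebra.comul : H →ₗ[k] H ⊗[k] H) h - 1 ⊗ₜ[k] h ∈
      LinearMap.range (TensorProduct.map I.subtype (LinearMap.id : H →ₗ[k] H)) := by
  rw [coinv_eq_ker, LinearMap.mem_ker, chi_apply, ← LinearMap.mem_ker, ker_map_mkQ_left]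

lemma gal_tmul_one_sub (h : H) :
    gal k H (h ⊗ₜ[k] (1 : H) - (1 : H) ⊗ₜ[k] h) =
      (Coalgebra.comul : H →ₗ[k] H ⊗[k] H) h - 1 ⊗ₜ[k] h := by
  rw [map_sub]
  congr 1
  · rw [gal_tmul (ℛ k h) 1]
    simp only [mul_one]
    exact (ℛ k h).eq
  · simp only [gal, LinearMap.comp_apply, LinearMap.rTensor_tmul, Bialgebra.comul_one,
      Algebra.TensorProduct.one_def]
    simp

lemma cotensorL_tmul {u : H} (r : Repr k u) (v : H) :
    cotensorL k H I (u ⊗ₜ[k] v) =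
      ∑ i ∈ r.index, r.left i ⊗ₜ[k] (I.mkQ (r.right i) ⊗ₜ[k] v) := by
  simp only [cotensorL, LinearMap.comp_apply, TensorProduct.map_tmul, LinearMap.id_coe, id_eq]
  rw [← r.eq, TensorProduct.sum_tmul, map_sum, map_sum]
  simp

lemma cotensorR_tmul (u : H) {v : H} (s : Repr k v) :
    cotensorR k H I (u ⊗ₜ[k] v) =
      ∑ l ∈ s.index, u ⊗ₜ[k] (I.mkQ (s.left l) ⊗ₜ[k] s.right l) := by
  simp only [cotensorR, LinearMap.comp_apply, TensorProduct.map_tmul, LinearMap.id_coe, id_eq]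
  rw [← s.eq, map_sum, TensorProduct.tmul_sum]
  simp

lemma cotensorL_gal (z : H ⊗[k] H) :
    cotensorL k H I (gal k H z) =
      thetaQ I hI (thetaB I (TensorProduct.map (LinearMap.id : H →ₗ[k] H)
        (TensorProduct.mk k (H ⧸ I) H (I.mkQ 1)) z)) := by
  induction z using TensorProduct.induction_on with
  | zero => simp
  | add u v hu hv => rw [map_add, map_add, map_add, map_add, map_add, hu, hv]
  | tmul x h =>
    classical
    let r : Repr k x := ℛ k x
    let a₁ : (i : r.ι) → Repr k (r.left i) := fun i => ℛ k (r.left i)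
    have hL : cotensorL k H I (gal k H (x ⊗ₜ[k] h)) =
        ∑ i ∈ r.index, ∑ j ∈ (a₁ i).index,
          (a₁ i).left j ⊗ₜ[k] (I.mkQ ((a₁ i).right j) ⊗ₜ[k] (r.right i * h)) := by
      rw [gal_tmul r h, map_sum]
      exact Finset.sum_congr rfl fun i _ => cotensorL_tmul (a₁ i) (r.right i * h)
    have hR : thetaQ I hI (thetaB I (TensorProduct.map (LinearMap.id : H →ₗ[k] H)
        (TensorProduct.mk k (H ⧸ I) H (I.mkQ 1)) (x ⊗ₜ[k] h))) =
        ∑ i ∈ r.index, ∑ j ∈ (a₁ i).index,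
          (a₁ i).left j ⊗ₜ[k] (I.mkQ ((a₁ i).right j) ⊗ₜ[k] (r.right i * h)) := by
      simp only [TensorProduct.map_tmul, LinearMap.id_coe, id_eq, TensorProduct.mk_apply]
      rw [thetaB_tmul r (I.mkQ 1) h, map_sum]
      refine Finset.sum_congr rfl fun i _ => ?_
      rw [thetaQ_tmul hI (a₁ i) (I.mkQ 1) (r.right i * h)]
      refine Finset.sum_congr rfl fun j _ => ?_
      congr 2
      simp
    rw [hL, hR]

lemma cotensorR_gal (z : H ⊗[k] H) :
    cotensorR k H I (gal k H z) =
      thetaQ I hI (thetaB I (TensorProduct.map (LinearMap.id : H →ₗ[k] H)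
        (TensorProduct.map I.mkQ (LinearMap.id : H →ₗ[k] H)
          ∘ₗ (Coalgebra.comul : H →ₗ[k] H ⊗[k] H)) z)) := by
  induction z using TensorProduct.induction_on with
  | zero => simp
  | add u v hu hv => rw [map_add, map_add, map_add, map_add, map_add, hu, hv]
  | tmul x h =>
    classical
    let r : Repr k x := ℛ k x
    let a₁ : (i : r.ι) → Repr k (r.left i) := fun i => ℛ k (r.left i)
    let a₂ : (i : r.ι) → Repr k (r.right i) := fun i => ℛ k (r.right i)
    let s : Repr k h := ℛ k h
    have hL : cotensorR k H I (gal k H (x ⊗ₜ[k] h)) =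
        ∑ i ∈ r.index, ∑ j ∈ (a₂ i).index, ∑ l ∈ s.index,
          r.left i ⊗ₜ[k] (I.mkQ ((a₂ i).left j * s.left l) ⊗ₜ[k]
            ((a₂ i).right j * s.right l)) := by
      rw [gal_tmul r h, map_sum]
      refine Finset.sum_congr rfl fun i _ => ?_
      rw [cotensorR_tmul (r.left i) (Repr.mul (a₂ i) s)]
      calc ∑ l ∈ (Repr.mul (a₂ i) s).index, r.left i ⊗ₜ[k]
            (I.mkQ ((Repr.mul (a₂ i) s).left l) ⊗ₜ[k] (Repr.mul (a₂ i) s).right l)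
          = ∑ l ∈ (a₂ i).index ×ˢ s.index, r.left i ⊗ₜ[k]
            (I.mkQ ((a₂ i).left l.1 * s.left l.2) ⊗ₜ[k]
              ((a₂ i).right l.1 * s.right l.2)) := rfl
        _ = ∑ j ∈ (a₂ i).index, ∑ l ∈ s.index, r.left i ⊗ₜ[k]
            (I.mkQ ((a₂ i).left j * s.left l) ⊗ₜ[k]
              ((a₂ i).right j * s.right l)) := Finset.sum_product _ _ _
    have hR : thetaQ I hI (thetaB I (TensorProduct.map (LinearMap.id : H →ₗ[k] H)
        (TensorProduct.map I.mkQ (LinearMap.id : H →ₗ[k] H)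
          ∘ₗ (Coalgebra.comul : H →ₗ[k] H ⊗[k] H)) (x ⊗ₜ[k] h))) =
        ∑ l ∈ s.index, ∑ i ∈ r.index, ∑ j ∈ (a₁ i).index,
          (a₁ i).left j ⊗ₜ[k] (I.mkQ ((a₁ i).right j * s.left l) ⊗ₜ[k]
            (r.right i * s.right l)) := by
      simp only [TensorProduct.map_tmul, LinearMap.id_coe, id_eq, LinearMap.comp_apply]
      rw [show (TensorProduct.map I.mkQ (LinearMap.id : H →ₗ[k] H))
          ((Coalgebra.comul : H →ₗ[k] H ⊗[k] H) h)
        = ∑ l ∈ s.index, I.mkQ (s.left l) ⊗ₜ[k] s.right l from by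
          rw [← s.eq, map_sum]; simp, TensorProduct.tmul_sum, map_sum, map_sum]
      refine Finset.sum_congr rfl fun l _ => ?_
      rw [thetaB_tmul r (I.mkQ (s.left l)) (s.right l), map_sum]
      refine Finset.sum_congr rfl fun i _ => ?_
      rw [thetaQ_tmul hI (a₁ i) (I.mkQ (s.left l)) (r.right i * s.right l)]
      simp
    rw [hL, hR]
    have key := coassoc_tri r a₁ a₂
      (TensorProduct.map LinearMap.id
        (∑ l ∈ s.index, TensorProduct.map (I.mkQ ∘ₗ LinearMap.mulRight k (s.left l))
          (LinearMap.mulRight k (s.right l))))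
    simp only [TensorProduct.map_tmul, LinearMap.comp_apply, LinearMap.id_coe, id_eq,
      LinearMap.sum_apply, LinearMap.mulRight_apply, TensorProduct.tmul_sum,
      TensorProduct.map_tmul] at key
    rw [← key]
    calc ∑ i ∈ r.index, ∑ j ∈ (a₁ i).index, ∑ l ∈ s.index,
          (a₁ i).left j ⊗ₜ[k] (I.mkQ ((a₁ i).right j * s.left l) ⊗ₜ[k]
            (r.right i * s.right l))
        = ∑ i ∈ r.index, ∑ l ∈ s.index, ∑ j ∈ (a₁ i).index,
          (a₁ i).left j ⊗ₜ[k] (I.mkQ ((a₁ i).right j * s.left l) ⊗ₜ[k]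
            (r.right i * s.right l)) := Finset.sum_congr rfl fun i _ => Finset.sum_comm
      _ = ∑ l ∈ s.index, ∑ i ∈ r.index, ∑ j ∈ (a₁ i).index,
          (a₁ i).left j ⊗ₜ[k] (I.mkQ ((a₁ i).right j * s.left l) ⊗ₜ[k]
            (r.right i * s.right l)) := Finset.sum_comm


lemma map_id_chi_apply (u : H ⊗[k] H) :
    TensorProduct.map (LinearMap.id : H →ₗ[k] H) (chi I) u
      = TensorProduct.map (LinearMap.id : H →ₗ[k] H)
          (TensorProduct.map I.mkQ (LinearMap.id : H →ₗ[k] H)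
            ∘ₗ (Coalgebra.comul : H →ₗ[k] H ⊗[k] H)) u
        - TensorProduct.map (LinearMap.id : H →ₗ[k] H)
            (TensorProduct.mk k (H ⧸ I) H (I.mkQ 1)) u := by
  show (LinearMap.lTensor H (chi I)) u = (LinearMap.lTensor H _) u - (LinearMap.lTensor H _) u
  rw [show chi I = (TensorProduct.map I.mkQ (LinearMap.id : H →ₗ[k] H)
      ∘ₗ (Coalgebra.comul : H →ₗ[k] H ⊗[k] H))
    - TensorProduct.mk k (H ⧸ I) H (I.mkQ 1) from rfl, LinearMap.lTensor_sub,
    LinearMap.sub_apply]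

include hI in
lemma gal_mem_cotensor_iff (u : H ⊗[k] H) :
    gal k H u ∈ cotensor k H I ↔
      TensorProduct.map (LinearMap.id : H →ₗ[k] H) (chi I) u = 0 := by
  constructor
  · intro h
    have h0 : cotensorL k H I (gal k H u) - cotensorR k H I (gal k H u) = 0 := by
      simpa [cotensor, LinearMap.sub_apply] using h
    rw [cotensorL_gal hI, cotensorR_gal hI, sub_eq_zero] at h0
    have h1 : thetaQ I hI (thetaB I
        (TensorProduct.map (LinearMap.id : H →ₗ[k] H) (chi I) u)) = 0 := by
      rw [map_id_chi_apply, map_sub, map_sub, h0, sub_self]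
    have h2 := congrArg (fun w => lambdaB I (lambdaQ I hI w)) h1
    simpa [lambdaQ_thetaQ hI, lambdaB_thetaB] using h2
  · intro h
    have h0 : TensorProduct.map (LinearMap.id : H →ₗ[k] H)
        (TensorProduct.map I.mkQ (LinearMap.id : H →ₗ[k] H)
          ∘ₗ (Coalgebra.comul : H →ₗ[k] H ⊗[k] H)) u
      = TensorProduct.map (LinearMap.id : H →ₗ[k] H)
          (TensorProduct.mk k (H ⧸ I) H (I.mkQ 1)) u := by
      have := map_id_chi_apply (I := I) u
      rw [h] at this
      exact (sub_eq_zero.mp this.symm)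
    simp only [cotensor, LinearMap.mem_ker, LinearMap.sub_apply]
    rw [cotensorL_gal hI, cotensorR_gal hI, h0, sub_self]

include hI in
lemma cotensor_eq_map_gal :
    cotensor k H I = Submodule.map (gal k H)
      (LinearMap.range (TensorProduct.map (LinearMap.id : H →ₗ[k] H)
        (coinv k H I).subtype)) := by
  ext t
  constructor
  · intro ht
    refine ⟨galInv k H t, ?_, gal_galInv t⟩
    have : gal k H (galInv k H t) ∈ cotensor k H I := by rw [gal_galInv]; exact ht
    have h0 := (gal_mem_cotensor_iff hI _).mp this
    have : galInv k H t ∈ LinearMap.ker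
        (TensorProduct.map (LinearMap.id : H →ₗ[k] H) (chi I)) := h0
    rwa [ker_map_phi_right (chi I)] at this
  · rintro ⟨u, hu, rfl⟩
    refine (gal_mem_cotensor_iff hI u).mpr ?_
    rw [← LinearMap.mem_ker, ker_map_phi_right (chi I)]
    exact hu

lemma epsTensorId_tmul (u v : H) : epsTensorId k H (u ⊗ₜ[k] v) = εε u • v := by
  simp [epsTensorId]

lemma idTensorEps_tmul (u v : H) : idTensorEps k H (u ⊗ₜ[k] v) = εε v • u := by
  simp [idTensorEps]

lemma eps_sub_gal_tmul (g c : H) :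
    (epsTensorId k H - idTensorEps k H) (gal k H (g ⊗ₜ[k] c)) = g * c - εε c • g := by
  classical
  let r : Repr k g := ℛ k g
  rw [LinearMap.sub_apply, gal_tmul r c, map_sum, map_sum]
  rw [Finset.sum_congr rfl (fun i _ => epsTensorId_tmul (r.left i) (r.right i * c)),
    Finset.sum_congr rfl (fun i _ => idTensorEps_tmul (r.left i) (r.right i * c))]
  congr 1
  · calc ∑ i ∈ r.index, εε (r.left i) • (r.right i * c)
        = (∑ i ∈ r.index, εε (r.left i) • r.right i) * c := by
          rw [Finset.sum_mul]
          exact Finset.sum_congr rfl fun i _ => (smul_mul_assoc _ _ _).symm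
      _ = g * c := by rw [sum_counit_smul_left r]
  · calc ∑ i ∈ r.index, εε (r.right i * c) • r.left i
        = εε c • ∑ i ∈ r.index, εε (r.right i) • r.left i := by
          rw [Finset.smul_sum]
          refine Finset.sum_congr rfl fun i _ => ?_
          rw [Bialgebra.counit_mul, mul_comm (εε (r.right i)) (εε c), ← smul_smul]
      _ = εε c • g := by rw [sum_counit_smul_right r]

lemma one_mem_coinv : (1 : H) ∈ coinv k H I := by
  rw [coinv_eq_ker, LinearMap.mem_ker, chi_apply, Bialgebra.comul_one,
    Algebra.TensorProduct.one_def, sub_self, map_zero]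

include hI in
lemma map_eps_cotensor :
    Submodule.map (epsTensorId k H - idTensorEps k H) (cotensor k H I)
      = HSplus k H ((coinv k H I : Submodule k H) : Set H) := by
  rw [cotensor_eq_map_gal hI, ← Submodule.map_comp,
    TensorProduct.range_map_eq_span_tmul, Submodule.map_span]
  apply le_antisymm
  · rw [Submodule.span_le]
    rintro z ⟨t, ⟨g, c, rfl⟩, rfl⟩
    rw [LinearMap.comp_apply]
    simp only [LinearMap.id_coe, id_eq, Submodule.coe_subtype]
    rw [eps_sub_gal_tmul]
    refine Submodule.subset_span ?_
    refine ⟨g, (c : H) - εε (c : H) • (1 : H), ⟨?_, ?_⟩, ?_⟩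
    · exact sub_mem c.2 (Submodule.smul_mem _ _ one_mem_coinv)
    · simp [Bialgebra.counit_one]
    · rw [mul_sub, mul_smul_comm, mul_one]
  · rw [HSplus, leftIdealGen, Submodule.span_le]
    rintro z ⟨h, b, ⟨hbC, hbe⟩, rfl⟩
    refine Submodule.subset_span ?_
    refine ⟨h ⊗ₜ[k] b, ⟨h, ⟨b, hbC⟩, rfl⟩, ?_⟩
    show ((epsTensorId k H - idTensorEps k H) ∘ₗ gal k H) (h ⊗ₜ[k] b) = h * b
    rw [LinearMap.comp_apply, eps_sub_gal_tmul, hbe, zero_smul, sub_zero]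

end Key


section JBside

variable {B : Subalgebra k H}

lemma hsplus_mul_mem (S : Set H) (g : H) {x : H} (hx : x ∈ HSplus k H S) :
    g * x ∈ HSplus k H S := by
  induction hx using Submodule.span_induction with
  | mem z hz =>
    obtain ⟨h, b, hb, rfl⟩ := hz
    exact Submodule.subset_span ⟨g * h, b, hb, (mul_assoc g h b).symm⟩
  | zero => rw [mul_zero]; exact zero_mem _
  | add u v _ _ hu hv => rw [mul_add]; exact add_mem hu hv
  | smul c u _ hu => rw [mul_smul_comm]; exact Submodule.smul_mem _ c hu

lemma gal_one_tmul (w : H) : gal k H ((1 : H) ⊗ₜ[k] w) = (1 : H) ⊗ₜ[k] w := by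
  simp only [gal, LinearMap.comp_apply, LinearMap.rTensor_tmul, Bialgebra.comul_one,
    Algebra.TensorProduct.one_def]
  simp

lemma JB_mul_left (S : Set H) (g : H) {w : H ⊗[k] H} (hw : w ∈ JB k H S) :
    ((g ⊗ₜ[k] (1 : H)) * w) ∈ JB k H S := by
  induction hw using Submodule.span_induction with
  | mem z hz =>
    obtain ⟨x, y, b, hb, rfl⟩ := hz
    rw [mul_sub]
    refine Submodule.subset_span ⟨g * x, y, b, hb, ?_⟩
    rw [Algebra.TensorProduct.tmul_mul_tmul, Algebra.TensorProduct.tmul_mul_tmul,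
      one_mul, one_mul, mul_assoc]
  | zero => rw [mul_zero]; exact zero_mem _
  | add u v _ _ hu hv => rw [mul_add]; exact add_mem hu hv
  | smul c u _ hu => rw [mul_smul_comm]; exact Submodule.smul_mem _ c hu

lemma gal_lmul (g : H) (z : H ⊗[k] H) :
    gal k H ((g ⊗ₜ[k] (1 : H)) * z) =
      (Coalgebra.comul : H →ₗ[k] H ⊗[k] H) g * gal k H z := by
  induction z using TensorProduct.induction_on with
  | zero => simp
  | add u v hu hv => rw [mul_add, map_add, map_add, mul_add, hu, hv]
  | tmul x y =>
    classical
    let rg : Repr k g := ℛ k g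
    let rx : Repr k x := ℛ k x
    rw [Algebra.TensorProduct.tmul_mul_tmul, one_mul, gal_tmul (Repr.mul rg rx) y,
      gal_tmul rx y, ← rg.eq, Finset.sum_mul_sum]
    calc ∑ p ∈ (Repr.mul rg rx).index,
          (Repr.mul rg rx).left p ⊗ₜ[k] ((Repr.mul rg rx).right p * y)
        = ∑ i ∈ rg.index, ∑ j ∈ rx.index,
          (rg.left i * rx.left j) ⊗ₜ[k] (rg.right i * rx.right j * y) :=
          Finset.sum_product _ _ _
      _ = ∑ i ∈ rg.index, ∑ j ∈ rx.index,
          (rg.left i ⊗ₜ[k] rg.right i) * (rx.left j ⊗ₜ[k] (rx.right j * y)) := by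
          refine Finset.sum_congr rfl fun i _ => Finset.sum_congr rfl fun j _ => ?_
          rw [Algebra.TensorProduct.tmul_mul_tmul, mul_assoc]

variable (hB : IsRightCoidealSubalgebra k H B)

include hB in
lemma map_gal_JB_le :
    Submodule.map (gal k H) (JB k H (B : Set H)) ≤
      LinearMap.range (TensorProduct.map (HSplus k H (B : Set H)).subtype
        (LinearMap.id : H →ₗ[k] H)) := by
  rw [JB, Submodule.map_span, Submodule.span_le]
  rintro z ⟨w, ⟨x, y, b, hb, rfl⟩, rfl⟩
  classical
  obtain ⟨rb, hrb⟩ := exists_repr_subset (hB b hb)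
  let rx : Repr k x := ℛ k x
  rw [map_sub, gal_tmul (Repr.mul rx rb) y, gal_tmul rx (b * y)]
  have hby : b * y = ∑ j ∈ rb.index, εε (rb.left j) • (rb.right j * y) := by
    conv_lhs => rw [← sum_counit_smul_left rb]
    rw [Finset.sum_mul]
    exact Finset.sum_congr rfl fun j _ => smul_mul_assoc _ _ _
  have hb2 : ∀ i ∈ rx.index, rx.left i ⊗ₜ[k] (rx.right i * (b * y)) =
      ∑ j ∈ rb.index, εε (rb.left j) •
        (rx.left i ⊗ₜ[k] (rx.right i * rb.right j * y)) := by
    intro i _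
    rw [hby, Finset.mul_sum, TensorProduct.tmul_sum]
    refine Finset.sum_congr rfl fun j _ => ?_
    rw [mul_smul_comm, TensorProduct.tmul_smul, ← mul_assoc]
  rw [Finset.sum_congr rfl hb2]
  have key : ∑ p ∈ (Repr.mul rx rb).index,
        (Repr.mul rx rb).left p ⊗ₜ[k] ((Repr.mul rx rb).right p * y)
      = ∑ i ∈ rx.index, ∑ j ∈ rb.index,
        (rx.left i * rb.left j) ⊗ₜ[k] (rx.right i * rb.right j * y) :=
    Finset.sum_product _ _ _
  rw [key, ← Finset.sum_sub_distrib]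
  refine Submodule.sum_mem _ fun i _ => ?_
  rw [← Finset.sum_sub_distrib]
  refine Submodule.sum_mem _ fun j hj => ?_
  have hterm : (rx.left i * rb.left j) ⊗ₜ[k] (rx.right i * rb.right j * y) -
      εε (rb.left j) • (rx.left i ⊗ₜ[k] (rx.right i * rb.right j * y))
    = (rx.left i * (rb.left j - εε (rb.left j) • 1)) ⊗ₜ[k]
        (rx.right i * rb.right j * y) := by
    rw [mul_sub, TensorProduct.sub_tmul, mul_smul_comm, mul_one,
      TensorProduct.smul_tmul']
  rw [hterm]
  refine tmul_mem_range_left ?_ _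
  refine Submodule.subset_span ⟨rx.left i, rb.left j - εε (rb.left j) • 1,
    ⟨?_, ?_⟩, rfl⟩
  · exact sub_mem ((Subalgebra.mem_toSubmodule B).mp (hrb j hj))
      (B.smul_mem B.one_mem _)
  · simp [Bialgebra.counit_one]

include hB in
lemma tmul_mem_map_gal_JB {b : H} (hb : b ∈ B) (hbe : εε b = 0) (z : H) :
    b ⊗ₜ[k] z ∈ Submodule.map (gal k H) (JB k H (B : Set H)) := by
  classical
  obtain ⟨rb, hrb⟩ := exists_repr_subset (hB b hb)
  let a₁ : (j : rb.ι) → Repr k (rb.left j) := fun j => ℛ k (rb.left j)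
  let a₂ : (j : rb.ι) → Repr k (rb.right j) := fun j => ℛ k (rb.right j)
  set E : H ⊗[k] H := ∑ j ∈ rb.index,
    ((1 * rb.left j) ⊗ₜ[k] (𝒮 (rb.right j) * z)
      - (1 : H) ⊗ₜ[k] (rb.left j * (𝒮 (rb.right j) * z))) with hE
  have hEJ : E ∈ JB k H (B : Set H) := by
    refine Submodule.sum_mem _ fun j hj => ?_
    exact Submodule.subset_span ⟨1, 𝒮 (rb.right j) * z, rb.left j, hrb j hj, rfl⟩
  refine ⟨E, hEJ, ?_⟩
  rw [hE, map_sum]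
  have hterm : ∀ j ∈ rb.index,
      gal k H ((1 * rb.left j) ⊗ₜ[k] (𝒮 (rb.right j) * z)
        - (1 : H) ⊗ₜ[k] (rb.left j * (𝒮 (rb.right j) * z)))
      = (∑ i ∈ (a₁ j).index, (a₁ j).left i ⊗ₜ[k]
          ((a₁ j).right i * (𝒮 (rb.right j) * z)))
        - (1 : H) ⊗ₜ[k] (rb.left j * (𝒮 (rb.right j) * z)) := by
    intro j _
    rw [map_sub, one_mul, gal_tmul (a₁ j) (𝒮 (rb.right j) * z), gal_one_tmul]
  rw [Finset.sum_congr rfl hterm, Finset.sum_sub_distrib]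
  have h2 : ∑ j ∈ rb.index, (1 : H) ⊗ₜ[k] (rb.left j * (𝒮 (rb.right j) * z)) = 0 := by
    rw [← TensorProduct.tmul_sum,
      show ∑ j ∈ rb.index, rb.left j * (𝒮 (rb.right j) * z)
        = (∑ j ∈ rb.index, rb.left j * 𝒮 (rb.right j)) * z from by
        rw [Finset.sum_mul]; exact Finset.sum_congr rfl fun j _ => (mul_assoc _ _ _).symm,
      HopfAlgebra.sum_mul_antipode_eq_algebraMap_counit rb.toC, hbe, map_zero, zero_mul,
      TensorProduct.tmul_zero]
  rw [h2, sub_zero]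
  have key := coassoc_tri rb a₁ a₂
    (TensorProduct.map LinearMap.id ((LinearMap.mul' k H) ∘ₗ
      (TensorProduct.map LinearMap.id ((LinearMap.mulRight k z) ∘ₗ 𝒮))))
  simp only [TensorProduct.map_tmul, LinearMap.comp_apply, LinearMap.id_coe, id_eq,
    LinearMap.mul'_apply, LinearMap.mulRight_apply] at key
  rw [key]
  calc ∑ j ∈ rb.index, ∑ i ∈ (a₂ j).index,
        rb.left j ⊗ₜ[k] ((a₂ j).left i * (𝒮 ((a₂ j).right i) * z))
      = ∑ j ∈ rb.index, rb.left j ⊗ₜ[k] (εε (rb.right j) • z) := by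
        refine Finset.sum_congr rfl fun j _ => ?_
        rw [← TensorProduct.tmul_sum]
        congr 1
        calc ∑ i ∈ (a₂ j).index, (a₂ j).left i * (𝒮 ((a₂ j).right i) * z)
            = (∑ i ∈ (a₂ j).index, (a₂ j).left i * 𝒮 ((a₂ j).right i)) * z := by
              rw [Finset.sum_mul]
              exact Finset.sum_congr rfl fun i _ => (mul_assoc _ _ _).symm
          _ = εε (rb.right j) • z := by
              rw [HopfAlgebra.sum_mul_antipode_eq_algebraMap_counit (a₂ j).toC, Algebra.smul_def]
    _ = b ⊗ₜ[k] z := by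
        have hx := sum_counit_smul_right rb
        calc ∑ j ∈ rb.index, rb.left j ⊗ₜ[k] (εε (rb.right j) • z)
            = ∑ j ∈ rb.index, (εε (rb.right j) • rb.left j) ⊗ₜ[k] z := by
              refine Finset.sum_congr rfl fun j _ => ?_
              simp only [TensorProduct.tmul_smul, ← TensorProduct.smul_tmul']
          _ = b ⊗ₜ[k] z := by rw [← TensorProduct.sum_tmul, hx]


include hB in
lemma tmul_mem_map_gal_JB_of_mem {w : H} (hw : w ∈ HSplus k H (B : Set H)) (v : H) :
    w ⊗ₜ[k] v ∈ Submodule.map (gal k H) (JB k H (B : Set H)) := by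
  induction hw using Submodule.span_induction with
  | zero => rw [TensorProduct.zero_tmul]; exact zero_mem _
  | add u u' _ _ hu hu' => rw [TensorProduct.add_tmul]; exact add_mem hu hu'
  | smul c u _ hu => rw [← TensorProduct.smul_tmul']; exact Submodule.smul_mem _ c hu
  | mem z hz =>
    classical
    obtain ⟨g, b, ⟨hbB, hbe⟩, rfl⟩ := hz
    let r : Repr k g := ℛ k g
    let a₁ : (i : r.ι) → Repr k (r.left i) := fun i => ℛ k (r.left i)
    let a₂ : (i : r.ι) → Repr k (r.right i) := fun i => ℛ k (r.right i)
    have claim1 : ∀ i : r.ι,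
        (Coalgebra.comul : H →ₗ[k] H ⊗[k] H) (r.left i) *
          (b ⊗ₜ[k] (𝒮 (r.right i) * v)) ∈
        Submodule.map (gal k H) (JB k H (B : Set H)) := by
      intro i
      obtain ⟨wi, hwi, hgal⟩ := tmul_mem_map_gal_JB hB hbB hbe (𝒮 (r.right i) * v)
      refine ⟨(r.left i ⊗ₜ[k] (1 : H)) * wi, JB_mul_left _ _ hwi, ?_⟩
      rw [gal_lmul, hgal]
    have hsum : ∑ i ∈ r.index, (Coalgebra.comul : H →ₗ[k] H ⊗[k] H) (r.left i) *
        (b ⊗ₜ[k] (𝒮 (r.right i) * v)) ∈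
        Submodule.map (gal k H) (JB k H (B : Set H)) :=
      Submodule.sum_mem _ fun i _ => claim1 i
    have claim2 : ∑ i ∈ r.index, (Coalgebra.comul : H →ₗ[k] H ⊗[k] H) (r.left i) *
        (b ⊗ₜ[k] (𝒮 (r.right i) * v)) = (g * b) ⊗ₜ[k] v := by
      have key := coassoc_tri r a₁ a₂
        (TensorProduct.map (LinearMap.mulRight k b) ((LinearMap.mul' k H) ∘ₗ
          (TensorProduct.map LinearMap.id ((LinearMap.mulRight k v) ∘ₗ 𝒮))))
      simp only [TensorProduct.map_tmul, LinearMap.comp_apply, LinearMap.id_coe, id_eq,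
        LinearMap.mul'_apply, LinearMap.mulRight_apply] at key
      calc ∑ i ∈ r.index, (Coalgebra.comul : H →ₗ[k] H ⊗[k] H) (r.left i) *
            (b ⊗ₜ[k] (𝒮 (r.right i) * v))
          = ∑ i ∈ r.index, ∑ j ∈ (a₁ i).index,
            ((a₁ i).left j * b) ⊗ₜ[k] ((a₁ i).right j * (𝒮 (r.right i) * v)) := by
            refine Finset.sum_congr rfl fun i _ => ?_
            rw [← (a₁ i).eq, Finset.sum_mul]
            exact Finset.sum_congr rfl fun j _ => Algebra.TensorProduct.tmul_mul_tmul _ _ _ _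
        _ = ∑ i ∈ r.index, ∑ j ∈ (a₂ i).index,
            (r.left i * b) ⊗ₜ[k] ((a₂ i).left j * (𝒮 ((a₂ i).right j) * v)) := key
        _ = ∑ i ∈ r.index, (r.left i * b) ⊗ₜ[k] (εε (r.right i) • v) := by
            refine Finset.sum_congr rfl fun i _ => ?_
            rw [← TensorProduct.tmul_sum]
            congr 1
            calc ∑ j ∈ (a₂ i).index, (a₂ i).left j * (𝒮 ((a₂ i).right j) * v)
                = (∑ j ∈ (a₂ i).index, (a₂ i).left j * 𝒮 ((a₂ i).right j)) * v := by
                  rw [Finset.sum_mul]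
                  exact Finset.sum_congr rfl fun j _ => (mul_assoc _ _ _).symm
              _ = εε (r.right i) • v := by
                  rw [HopfAlgebra.sum_mul_antipode_eq_algebraMap_counit (a₂ i).toC, Algebra.smul_def]
        _ = (g * b) ⊗ₜ[k] v := by
            have hx := sum_counit_smul_right r
            calc ∑ i ∈ r.index, (r.left i * b) ⊗ₜ[k] (εε (r.right i) • v)
                = ∑ i ∈ r.index, ((εε (r.right i) • r.left i) * b) ⊗ₜ[k] v := by
                  refine Finset.sum_congr rfl fun i _ => ?_
                  rw [TensorProduct.tmul_smul, smul_mul_assoc, ← TensorProduct.smul_tmul']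
              _ = (g * b) ⊗ₜ[k] v := by
                  rw [← TensorProduct.sum_tmul, ← Finset.sum_mul, hx]
    rw [← claim2]
    exact hsum

include hB in
lemma mem_JB_iff (z : H ⊗[k] H) :
    z ∈ JB k H (B : Set H) ↔ gal k H z ∈
      LinearMap.range (TensorProduct.map (HSplus k H (B : Set H)).subtype
        (LinearMap.id : H →ₗ[k] H)) := by
  constructor
  · intro hz
    exact map_gal_JB_le hB ⟨z, hz, rfl⟩
  · intro hz
    have hle : LinearMap.range (TensorProduct.map (HSplus k H (B : Set H)).subtype
        (LinearMap.id : H →ₗ[k] H)) ≤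
        Submodule.map (gal k H) (JB k H (B : Set H)) := by
      rw [TensorProduct.range_map_eq_span_tmul, Submodule.span_le]
      rintro t ⟨w, v, rfl⟩
      exact tmul_mem_map_gal_JB_of_mem hB w.2 v
    obtain ⟨z', hz', hgal⟩ := hle hz
    have : z' = z := by
      have := congrArg (galInv k H) hgal
      rwa [galInv_gal, galInv_gal] at this
    rwa [← this]

include hB in
lemma equalizer_set_eq_coinv :
    {h : H | h ⊗ₜ[k] (1 : H) - (1 : H) ⊗ₜ[k] h ∈ JB k H (B : Set H)} =
      ((coinv k H (HSplus k H (B : Set H)) : Submodule k H) : Set H) := by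
  ext h
  simp only [Set.mem_setOf_eq, SetLike.mem_coe]
  rw [mem_JB_iff hB, gal_tmul_one_sub, mem_coinv_iff]

lemma hsplus_isLeftIdealCoideal (hB' : IsRightCoidealSubalgebra k H B) :
    IsLeftIdealCoideal k H (HSplus k H (B : Set H)) := by
  constructor
  · exact fun h x hx => hsplus_mul_mem _ h hx
  · intro x hx
    induction hx using Submodule.span_induction with
    | mem z hz =>
      obtain ⟨h, b, ⟨hbB, hbe⟩, rfl⟩ := hz
      rw [Bialgebra.counit_mul, hbe, mul_zero]
    | zero => rw [map_zero]
    | add u v _ _ hu hv => rw [map_add, hu, hv, add_zero]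
    | smul c u _ hu => rw [map_smul, hu, smul_zero]
  · intro x hx
    induction hx using Submodule.span_induction with
    | zero => rw [map_zero]; exact zero_mem _
    | add u v _ _ hu hv => rw [map_add]; exact add_mem hu hv
    | smul c u _ hu => rw [map_smul]; exact Submodule.smul_mem _ c hu
    | mem z hz =>
      classical
      obtain ⟨g, b, ⟨hbB, hbe⟩, rfl⟩ := hz
      obtain ⟨rb, hrb⟩ := exists_repr_subset (hB' b hbB)
      let rg : Repr k g := ℛ k g
      rw [show (Coalgebra.comul : H →ₗ[k] H ⊗[k] H) (g * b)
          = ∑ i ∈ rg.index, ∑ j ∈ rb.index,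
            (rg.left i * rb.left j) ⊗ₜ[k] (rg.right i * rb.right j) from by
        rw [Bialgebra.comul_mul, ← rg.eq, ← rb.eq, Finset.sum_mul_sum]
        exact Finset.sum_congr rfl fun i _ => Finset.sum_congr rfl fun j _ =>
          Algebra.TensorProduct.tmul_mul_tmul _ _ _ _]
      have hterm : ∀ i ∈ rg.index, ∀ j ∈ rb.index,
          (rg.left i * rb.left j) ⊗ₜ[k] (rg.right i * rb.right j)
          = (rg.left i * (rb.left j - εε (rb.left j) • 1)) ⊗ₜ[k]
              (rg.right i * rb.right j)
            + εε (rb.left j) • (rg.left i ⊗ₜ[k] (rg.right i * rb.right j)) := by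
        intro i _ j _
        rw [mul_sub, TensorProduct.sub_tmul, mul_smul_comm, mul_one,
          TensorProduct.smul_tmul', sub_add_cancel]
      rw [Finset.sum_congr rfl (fun i hi => Finset.sum_congr rfl (hterm i hi))]
      have hsplit : ∀ i ∈ rg.index,
          ∑ j ∈ rb.index,
            ((rg.left i * (rb.left j - εε (rb.left j) • 1)) ⊗ₜ[k]
              (rg.right i * rb.right j)
            + εε (rb.left j) • (rg.left i ⊗ₜ[k] (rg.right i * rb.right j)))
          = (∑ j ∈ rb.index,
              (rg.left i * (rb.left j - εε (rb.left j) • 1)) ⊗ₜ[k]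
                (rg.right i * rb.right j))
            + rg.left i ⊗ₜ[k] (rg.right i * b) := by
        intro i _
        rw [Finset.sum_add_distrib]
        congr 1
        calc ∑ j ∈ rb.index, εε (rb.left j) •
              (rg.left i ⊗ₜ[k] (rg.right i * rb.right j))
            = rg.left i ⊗ₜ[k] (rg.right i * ∑ j ∈ rb.index,
                εε (rb.left j) • rb.right j) := by
              rw [Finset.mul_sum, TensorProduct.tmul_sum]
              refine Finset.sum_congr rfl fun j _ => ?_
              rw [mul_smul_comm, TensorProduct.tmul_smul]
          _ = rg.left i ⊗ₜ[k] (rg.right i * b) := by rw [sum_counit_smul_left rb]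
      rw [Finset.sum_congr rfl hsplit]
      refine Submodule.sum_mem _ fun i hi => ?_
      refine add_mem ?_ ?_
      · refine le_sup_left (α := Submodule k (H ⊗[k] H)) ?_
        refine Submodule.sum_mem _ fun j hj => ?_
        refine tmul_mem_range_left ?_ _
        refine Submodule.subset_span ⟨rg.left i, rb.left j - εε (rb.left j) • 1,
          ⟨?_, ?_⟩, rfl⟩
        · exact sub_mem ((Subalgebra.mem_toSubmodule B).mp (hrb j hj))
            (B.smul_mem B.one_mem _)
        · simp [Bialgebra.counit_one]
      · refine le_sup_right (α := Submodule k (H ⊗[k] H)) ?_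
        refine tmul_mem_range_right ?_ _
        exact Submodule.subset_span ⟨rg.right i, b, ⟨hbB, hbe⟩, rfl⟩

end JBside


section CoinvSide

variable {I : Submodule k H}

lemma chi_apply' (x : H) : chi I x =
    TensorProduct.map I.mkQ (LinearMap.id : H →ₗ[k] H)
      ((Coalgebra.comul : H →ₗ[k] H ⊗[k] H) x) - I.mkQ 1 ⊗ₜ[k] x := by
  simp [chi]

lemma mem_coinv_iff' {x : H} : x ∈ coinv k H I ↔
    TensorProduct.map I.mkQ (LinearMap.id : H →ₗ[k] H)
      ((Coalgebra.comul : H →ₗ[k] H ⊗[k] H) x) = I.mkQ 1 ⊗ₜ[k] x := by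
  rw [coinv_eq_ker, LinearMap.mem_ker, chi_apply', sub_eq_zero]

lemma mul_mem_coinv (hI : ∀ (h x : H), x ∈ I → h * x ∈ I) {c d : H}
    (hc : c ∈ coinv k H I) (hd : d ∈ coinv k H I) : c * d ∈ coinv k H I := by
  classical
  let rc : Repr k c := ℛ k c
  have hker : ∀ w ∈ LinearMap.range
      (TensorProduct.map I.subtype (LinearMap.id : H →ₗ[k] H)),
      TensorProduct.map I.mkQ (LinearMap.id : H →ₗ[k] H)
        ((Coalgebra.comul : H →ₗ[k] H ⊗[k] H) c * w) = 0 := by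
    rintro w ⟨w', rfl⟩
    induction w' using TensorProduct.induction_on with
    | zero => rw [map_zero, mul_zero, map_zero]
    | add u v hu hv => rw [map_add, mul_add, map_add, hu, hv, add_zero]
    | tmul u v =>
      rw [TensorProduct.map_tmul, ← rc.eq, Finset.sum_mul, map_sum]
      refine Finset.sum_eq_zero fun i _ => ?_
      rw [Algebra.TensorProduct.tmul_mul_tmul, TensorProduct.map_tmul]
      have h0 : I.mkQ (rc.left i * I.subtype u) = 0 := by
        rw [Submodule.mkQ_apply, Submodule.Quotient.mk_eq_zero]
        exact hI _ _ u.2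
      rw [h0, TensorProduct.zero_tmul]
  have hcc := mem_coinv_iff'.mp hc
  have hdk := mem_coinv_iff (I := I) |>.mp hd
  rw [mem_coinv_iff', Bialgebra.comul_mul]
  have hsplit : (Coalgebra.comul : H →ₗ[k] H ⊗[k] H) c *
      (Coalgebra.comul : H →ₗ[k] H ⊗[k] H) d
      = (Coalgebra.comul : H →ₗ[k] H ⊗[k] H) c * ((1 : H) ⊗ₜ[k] d)
        + (Coalgebra.comul : H →ₗ[k] H ⊗[k] H) c *
          ((Coalgebra.comul : H →ₗ[k] H ⊗[k] H) d - (1 : H) ⊗ₜ[k] d) := by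
    rw [mul_sub, add_sub_cancel]
  rw [hsplit, map_add, hker _ hdk, add_zero]
  have h1 : (Coalgebra.comul : H →ₗ[k] H ⊗[k] H) c * ((1 : H) ⊗ₜ[k] d)
      = ∑ i ∈ rc.index, rc.left i ⊗ₜ[k] (rc.right i * d) := by
    rw [← rc.eq, Finset.sum_mul]
    refine Finset.sum_congr rfl fun i _ => ?_
    rw [Algebra.TensorProduct.tmul_mul_tmul, mul_one]
  rw [h1, map_sum]
  calc ∑ i ∈ rc.index, TensorProduct.map I.mkQ (LinearMap.id : H →ₗ[k] H)
        (rc.left i ⊗ₜ[k] (rc.right i * d))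
      = ∑ i ∈ rc.index, I.mkQ (rc.left i) ⊗ₜ[k] (rc.right i * d) := by
        refine Finset.sum_congr rfl fun i _ => ?_
        simp
    _ = TensorProduct.map (LinearMap.id : (H ⧸ I) →ₗ[k] H ⧸ I)
          (LinearMap.mulRight k d)
          (∑ i ∈ rc.index, I.mkQ (rc.left i) ⊗ₜ[k] rc.right i) := by
        rw [map_sum]
        refine Finset.sum_congr rfl fun i _ => ?_
        simp
    _ = TensorProduct.map (LinearMap.id : (H ⧸ I) →ₗ[k] H ⧸ I)
          (LinearMap.mulRight k d) (I.mkQ 1 ⊗ₜ[k] c) := by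
        rw [show ∑ i ∈ rc.index, I.mkQ (rc.left i) ⊗ₜ[k] rc.right i
          = TensorProduct.map I.mkQ (LinearMap.id : H →ₗ[k] H)
              ((Coalgebra.comul : H →ₗ[k] H ⊗[k] H) c) from by
            rw [← rc.eq, map_sum]; simp, hcc]
    _ = I.mkQ 1 ⊗ₜ[k] (c * d) := by simp

lemma comul_mem_coinv_tensor {c : H} (hc : c ∈ coinv k H I) :
    (Coalgebra.comul : H →ₗ[k] H ⊗[k] H) c ∈
      LinearMap.range (TensorProduct.map (coinv k H I).subtype
        (LinearMap.id : H →ₗ[k] H)) := by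
  classical
  have hker := ker_map_phi_left (chi I)
  rw [show coinv k H I = LinearMap.ker (chi I) from rfl, ← hker, LinearMap.mem_ker]
  let r : Repr k c := ℛ k c
  let a₁ : (i : r.ι) → Repr k (r.left i) := fun i => ℛ k (r.left i)
  let a₂ : (i : r.ι) → Repr k (r.right i) := fun i => ℛ k (r.right i)
  have hT : TensorProduct.map (chi I) (LinearMap.id : H →ₗ[k] H)
      ((Coalgebra.comul : H →ₗ[k] H ⊗[k] H) c)
      = ∑ i ∈ r.index, (TensorProduct.map I.mkQ (LinearMap.id : H →ₗ[k] H)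
          ((Coalgebra.comul : H →ₗ[k] H ⊗[k] H) (r.left i))) ⊗ₜ[k] r.right i
        - ∑ i ∈ r.index, (I.mkQ 1 ⊗ₜ[k] r.left i) ⊗ₜ[k] r.right i := by
    rw [← r.eq, map_sum, ← Finset.sum_sub_distrib (f := fun i =>
      (TensorProduct.map I.mkQ (LinearMap.id : H →ₗ[k] H)
        ((Coalgebra.comul : H →ₗ[k] H ⊗[k] H) (r.left i))) ⊗ₜ[k] r.right i)]
    refine Finset.sum_congr rfl fun i _ => ?_
    rw [TensorProduct.map_tmul, chi_apply', TensorProduct.sub_tmul]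
    rfl
  rw [hT]
  have hT1 : ∑ i ∈ r.index, (TensorProduct.map I.mkQ (LinearMap.id : H →ₗ[k] H)
        ((Coalgebra.comul : H →ₗ[k] H ⊗[k] H) (r.left i))) ⊗ₜ[k] r.right i
      = ∑ i ∈ r.index, ∑ j ∈ (a₁ i).index,
        (I.mkQ ((a₁ i).left j) ⊗ₜ[k] (a₁ i).right j) ⊗ₜ[k] r.right i := by
    refine Finset.sum_congr rfl fun i _ => ?_
    rw [← (a₁ i).eq, map_sum, TensorProduct.sum_tmul]
    simp
  have key := coassoc_tri (M := (H ⧸ I) ⊗[k] H ⊗[k] H) r a₁ a₂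
    ((TensorProduct.assoc k (H ⧸ I) H H).symm.toLinearMap ∘ₗ
      TensorProduct.map I.mkQ (LinearMap.id : H ⊗[k] H →ₗ[k] H ⊗[k] H))
  simp only [LinearMap.comp_apply, TensorProduct.map_tmul, LinearMap.id_coe, id_eq,
    LinearEquiv.coe_coe, TensorProduct.assoc_symm_tmul] at key
  have hMc : ∑ i ∈ r.index, ∑ j ∈ (a₂ i).index,
      (I.mkQ (r.left i) ⊗ₜ[k] (a₂ i).left j) ⊗ₜ[k] (a₂ i).right j
      = ∑ i ∈ r.index, (I.mkQ 1 ⊗ₜ[k] r.left i) ⊗ₜ[k] r.right i := by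
    have hM := congrArg ((TensorProduct.assoc k (H ⧸ I) H H).symm.toLinearMap ∘ₗ
      TensorProduct.map (LinearMap.id : (H ⧸ I) →ₗ[k] H ⧸ I)
        (Coalgebra.comul : H →ₗ[k] H ⊗[k] H)) (mem_coinv_iff'.mp hc)
    simp only [LinearMap.comp_apply] at hM
    calc ∑ i ∈ r.index, ∑ j ∈ (a₂ i).index,
          (I.mkQ (r.left i) ⊗ₜ[k] (a₂ i).left j) ⊗ₜ[k] (a₂ i).right j
        = ((TensorProduct.assoc k (H ⧸ I) H H).symm.toLinearMap ∘ₗ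
            TensorProduct.map (LinearMap.id : (H ⧸ I) →ₗ[k] H ⧸ I)
              (Coalgebra.comul : H →ₗ[k] H ⊗[k] H))
            (TensorProduct.map I.mkQ (LinearMap.id : H →ₗ[k] H)
              ((Coalgebra.comul : H →ₗ[k] H ⊗[k] H) c)) := by
          rw [show TensorProduct.map I.mkQ (LinearMap.id : H →ₗ[k] H)
              ((Coalgebra.comul : H →ₗ[k] H ⊗[k] H) c)
            = ∑ i ∈ r.index, I.mkQ (r.left i) ⊗ₜ[k] r.right i from by
              rw [← r.eq, map_sum]; simp, map_sum]
          simp only [LinearMap.comp_apply]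
          refine Finset.sum_congr rfl fun i _ => ?_
          rw [TensorProduct.map_tmul, LinearMap.id_coe, id_eq, ← (a₂ i).eq,
            TensorProduct.tmul_sum, map_sum]
          simp
      _ = ((TensorProduct.assoc k (H ⧸ I) H H).symm.toLinearMap ∘ₗ
            TensorProduct.map (LinearMap.id : (H ⧸ I) →ₗ[k] H ⧸ I)
              (Coalgebra.comul : H →ₗ[k] H ⊗[k] H)) (I.mkQ 1 ⊗ₜ[k] c) := by
          rw [mem_coinv_iff'.mp hc]
      _ = ∑ i ∈ r.index, (I.mkQ 1 ⊗ₜ[k] r.left i) ⊗ₜ[k] r.right i := by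
          simp only [LinearMap.comp_apply, TensorProduct.map_tmul, LinearMap.id_coe,
            id_eq, ← r.eq, TensorProduct.tmul_sum, map_sum]
          simp
  rw [hT1, key, hMc, sub_self]

lemma coinv_mono {I I' : Submodule k H} (hII : I ≤ I') :
    coinv k H I ≤ coinv k H I' := by
  intro x hx
  rw [mem_coinv_iff'] at hx ⊢
  let f : (H ⧸ I) →ₗ[k] H ⧸ I' := Submodule.mapQ I I' LinearMap.id
    (fun y hy => hII hy)
  have hcomp : ∀ w : H ⊗[k] H,
      TensorProduct.map I'.mkQ (LinearMap.id : H →ₗ[k] H) w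
      = TensorProduct.map f (LinearMap.id : H →ₗ[k] H)
          (TensorProduct.map I.mkQ (LinearMap.id : H →ₗ[k] H) w) := by
    intro w
    induction w using TensorProduct.induction_on with
    | zero => simp
    | add u v hu hv => rw [map_add, map_add, map_add, hu, hv]
    | tmul u v => simp [f, Submodule.mapQ_apply]
  rw [hcomp, hx, TensorProduct.map_tmul]
  simp [f, Submodule.mapQ_apply]

end CoinvSide

/-- `Ψ(I) = H^{co H/I}` and `Φ(B) = HB⁺` are mutually inverse,
inclusion-preserving bijections between left ideal coideals satisfying the coequalizer
condition and right coideal subalgebras satisfying the equalizer condition. -/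
theorem galois_correspondence (k H : Type*) [Field k] [Ring H] [HopfAlgebra k H] :
    (∀ I : Submodule k H, IsLeftIdealCoideal k H I → coequalizerCond k H I →
      ∃ B : Subalgebra k H, Subalgebra.toSubmodule B = coinv k H I ∧
        IsRightCoidealSubalgebra k H B ∧ equalizerCond k H (B : Set H) ∧
        HSplus k H (B : Set H) = I) ∧
    (∀ B : Subalgebra k H, IsRightCoidealSubalgebra k H B → equalizerCond k H (B : Set H) →
      IsLeftIdealCoideal k H (HSplus k H (B : Set H)) ∧
        coequalizerCond k H (HSplus k H (B : Set H)) ∧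
        ((coinv k H (HSplus k H (B : Set H)) : Submodule k H) : Set H) = (B : Set H)) ∧
    (∀ I I' : Submodule k H,
      IsLeftIdealCoideal k H I → coequalizerCond k H I →
      IsLeftIdealCoideal k H I' → coequalizerCond k H I' →
      I ≤ I' → coinv k H I ≤ coinv k H I') ∧
    (∀ B B' : Subalgebra k H,
      IsRightCoidealSubalgebra k H B → equalizerCond k H (B : Set H) →
      IsRightCoidealSubalgebra k H B' → equalizerCond k H (B' : Set H) →
      B ≤ B' → HSplus k H (B : Set H) ≤ HSplus k H (B' : Set H)) := by
  refine ⟨?_, ?_, ?_, ?_⟩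
  · -- part 1 : from left ideal coideals to right coideal subalgebras
    intro I hI hcoeq
    have hIl : ∀ (h x : H), x ∈ I → h * x ∈ I := hI.mul_mem_left
    set B₀ : Subalgebra k H := Submodule.toSubalgebra (coinv k H I) one_mem_coinv
      (fun x y hx hy => mul_mem_coinv hIl hx hy) with hB₀
    have hts : Subalgebra.toSubmodule B₀ = coinv k H I := rfl
    have hsetB : (B₀ : Set H) = ((coinv k H I : Submodule k H) : Set H) := rfl
    have hrcs : IsRightCoidealSubalgebra k H B₀ := by
      intro b hb
      exact comul_mem_coinv_tensor (I := I) hb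
    have hd : HSplus k H (B₀ : Set H) = I := by
      rw [hsetB, ← map_eps_cotensor hIl]
      exact hcoeq.symm
    refine ⟨B₀, hts, hrcs, ?_, hd⟩
    calc {h : H | h ⊗ₜ[k] (1 : H) - (1 : H) ⊗ₜ[k] h ∈ JB k H (B₀ : Set H)}
        = ((coinv k H (HSplus k H (B₀ : Set H)) : Submodule k H) : Set H) :=
          equalizer_set_eq_coinv hrcs
      _ = ((coinv k H I : Submodule k H) : Set H) := by rw [hd]
      _ = (B₀ : Set H) := rfl
  · -- part 2 : from right coideal subalgebras to left ideal coideals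
    intro B hB hBeq
    have hlic := hsplus_isLeftIdealCoideal hB
    have hset : ((coinv k H (HSplus k H (B : Set H)) : Submodule k H) : Set H)
        = (B : Set H) := by
      rw [← equalizer_set_eq_coinv hB]
      exact hBeq
    refine ⟨hlic, ?_, hset⟩
    show HSplus k H (B : Set H) =
      Submodule.map (epsTensorId k H - idTensorEps k H)
        (cotensor k H (HSplus k H (B : Set H)))
    rw [map_eps_cotensor hlic.mul_mem_left, hset]
  · -- part 3 : monotonicity of coinv
    intro I I' _ _ _ _ h
    exact coinv_mono h
  · -- part 4 : monotonicity of HSplus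
    intro B B' _ _ _ _ hBB'
    apply Submodule.span_mono
    rintro z ⟨h, b, ⟨hb, hbe⟩, rfl⟩
    exact ⟨h, b, ⟨hBB' hb, hbe⟩, rfl⟩


end HopfGalois
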